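/- Aperture dependence for intrinsic square functions: There is a constant C = C(β,n) such that for every β ∈ (0,1], α ∈ [1,∞), f ∈ L¹_loc(ℝⁿ) and x ∈ ℝⁿ, G_{β,α}(f)(x) ≤ C α^{3n/2+β} G_β(f)(x), where G_{β,α}(f)(x) := ( ∫₀^∞ ∫_{|y−x|<αt} [A_β(f)(y,t)]² dy dt/t^{n+1} )^{1/2} and G_β := G_{β,1}. -/

import Mathlib

open MeasureTheory Metric Set
open scoped ENNReal NNReal

noncomputable section

/-- `ℝⁿ`. -/
abbrev Rn (n : ℕ) := EuclideanSpace ℝ (Fin n)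

/-- Wilson's family `C_β(ℝⁿ)`: functions supported in the unit ball, with zero
integral, satisfying a `β`-Hölder bound with constant `1`. -/
def intrinsicFamily (n : ℕ) (β : ℝ) : Set (Rn n → ℝ) :=
  {φ | tsupport φ ⊆ closedBall 0 1 ∧ (∫ x, φ x) = 0 ∧
    ∀ x₁ x₂ : Rn n, |φ x₁ - φ x₂| ≤ dist x₁ x₂ ^ β}

/-- `A_β(f)(y,t) := sup_{φ ∈ C_β} |f ∗ φ_t(y)|`. -/
def intrinsicA (n : ℕ) (β : ℝ) (f : Rn n → ℝ) (y : Rn n) (t : ℝ) : ℝ≥0∞ :=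
  ⨆ (φ : Rn n → ℝ) (_ : φ ∈ intrinsicFamily n β),
    ENNReal.ofReal |∫ z, t ^ (-(n : ℝ)) * φ (t⁻¹ • (y - z)) * f z|

/-- The intrinsic Lusin area function with aperture `α`. -/
def intrinsicG (n : ℕ) (β α : ℝ) (f : Rn n → ℝ) (x : Rn n) : ℝ≥0∞ :=
  (∫⁻ t in Ioi (0 : ℝ),
      (∫⁻ y in ball x (α * t), intrinsicA n β f y t ^ (2 : ℝ)) /
        ENNReal.ofReal (t ^ (n + 1))) ^ ((1 : ℝ) / 2)

/-- Key pointwise comparison: enlarging the scale and moving the base point. -/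
lemma intrinsicA_le (n : ℕ) {β : ℝ} (hβ0 : 0 < β) (f : Rn n → ℝ)
    {y y' : Rn n} {t t' : ℝ} (ht : 0 < t) (h : t + dist y y' ≤ t') :
    intrinsicA n β f y t ≤
      ENNReal.ofReal ((t' / t) ^ ((n : ℝ) + β)) * intrinsicA n β f y' t' := by
  have hd : (0:ℝ) ≤ dist y y' := dist_nonneg
  have ht' : 0 < t' := lt_of_lt_of_le (by linarith) h
  set ρ : ℝ := t' / t with hρ
  have hρ0 : 0 < ρ := div_pos ht' ht
  set c : Rn n := t⁻¹ • (y - y') with hc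
  have hcn : ‖c‖ = dist y y' / t := by
    rw [hc, norm_smul, norm_inv, Real.norm_eq_abs, abs_of_pos ht, ← dist_eq_norm]
    ring
  have hkey : 1 + ‖c‖ ≤ ρ := by
    have e : 1 + ‖c‖ = (t + dist y y') / t := by rw [hcn]; field_simp
    rw [e, hρ]
    gcongr
  refine iSup₂_le fun φ hφ => ?_
  obtain ⟨hsupp, hint, hhold⟩ := hφ
  set ψ : Rn n → ℝ := fun u => ρ ^ (-β) * φ (ρ • u + c) with hψdef
  have hψ : ψ ∈ intrinsicFamily n β := by
    refine ⟨?_, ?_, ?_⟩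
    · refine closure_minimal ?_ Metric.isClosed_closedBall
      intro u hu
      have h1 : φ (ρ • u + c) ≠ 0 := by
        intro h0
        apply hu
        simp [hψdef, h0]
      have h2 : ρ • u + c ∈ closedBall (0 : Rn n) 1 :=
        hsupp (subset_tsupport _ h1)
      rw [mem_closedBall_zero_iff] at h2
      rw [mem_closedBall_zero_iff]
      have h4 : ‖ρ • u‖ ≤ 1 + ‖c‖ := by
        have e : ρ • u = (ρ • u + c) - c := by abel
        rw [e]
        exact (norm_sub_le _ _).trans (by linarith)
      rw [norm_smul, Real.norm_eq_abs, abs_of_pos hρ0] at h4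
      exact le_of_mul_le_mul_left (by simpa using h4.trans hkey) hρ0
    · have h3 : (∫ u, φ (ρ • u + c)) = 0 := by
        have e := MeasureTheory.Measure.integral_comp_smul (volume : Measure (Rn n))
          (fun v => φ (v + c)) ρ
        rw [e, integral_add_right_eq_self (fun v => φ v) c, hint, smul_zero]
      rw [hψdef]
      rw [MeasureTheory.integral_const_mul, h3, mul_zero]
    · intro u₁ u₂
      have e1 : ψ u₁ - ψ u₂ = ρ ^ (-β) * (φ (ρ • u₁ + c) - φ (ρ • u₂ + c)) := by
        rw [hψdef]; ring
      rw [e1, abs_mul, abs_of_nonneg (Real.rpow_nonneg hρ0.le _)]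
      have e2 : dist (ρ • u₁ + c) (ρ • u₂ + c) = ρ * dist u₁ u₂ := by
        rw [dist_eq_norm, dist_eq_norm]
        have e : ρ • u₁ + c - (ρ • u₂ + c) = ρ • (u₁ - u₂) := by module
        rw [e, norm_smul, Real.norm_eq_abs, abs_of_pos hρ0]
      calc ρ ^ (-β) * |φ (ρ • u₁ + c) - φ (ρ • u₂ + c)|
          ≤ ρ ^ (-β) * dist (ρ • u₁ + c) (ρ • u₂ + c) ^ β :=
            mul_le_mul_of_nonneg_left (hhold _ _) (Real.rpow_nonneg hρ0.le _)
        _ = dist u₁ u₂ ^ β := by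
            rw [e2, Real.mul_rpow hρ0.le dist_nonneg, ← mul_assoc, ← Real.rpow_add hρ0]
            simp
  have hz : ∀ z, t ^ (-(n:ℝ)) * φ (t⁻¹ • (y - z)) * f z
      = ρ ^ ((n:ℝ) + β) * (t' ^ (-(n:ℝ)) * ψ (t'⁻¹ • (y' - z)) * f z) := by
    intro z
    have e1 : ρ • (t'⁻¹ • (y' - z)) + c = t⁻¹ • (y - z) := by
      rw [smul_smul]
      have e0 : ρ * t'⁻¹ = t⁻¹ := by
        rw [hρ]; field_simp
      rw [e0, hc]
      module
    have e2 : ψ (t'⁻¹ • (y' - z)) = ρ ^ (-β) * φ (t⁻¹ • (y - z)) := by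
      rw [hψdef]; simp only; rw [e1]
    rw [e2]
    have e3 : ρ ^ ((n:ℝ) + β) * (ρ ^ (-β)) = ρ ^ (n:ℝ) := by
      rw [← Real.rpow_add hρ0]; ring_nf
    have e4 : ρ ^ (n:ℝ) * t' ^ (-(n:ℝ)) = t ^ (-(n:ℝ)) := by
      rw [hρ, Real.div_rpow ht'.le ht.le, Real.rpow_neg ht'.le, Real.rpow_neg ht.le]
      field_simp
    calc t ^ (-(n:ℝ)) * φ (t⁻¹ • (y - z)) * f z
        = (ρ ^ (n:ℝ) * t' ^ (-(n:ℝ))) * φ (t⁻¹ • (y - z)) * f z := by rw [e4]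
      _ = ρ ^ ((n:ℝ) + β) * (t' ^ (-(n:ℝ)) * (ρ ^ (-β) * φ (t⁻¹ • (y - z))) * f z) := by
          rw [← e3]; ring
  have hieq : |∫ z, t ^ (-(n:ℝ)) * φ (t⁻¹ • (y - z)) * f z|
      = ρ ^ ((n:ℝ) + β) * |∫ z, t' ^ (-(n:ℝ)) * ψ (t'⁻¹ • (y' - z)) * f z| := by
    simp_rw [hz]
    rw [MeasureTheory.integral_const_mul, abs_mul,
      abs_of_nonneg (Real.rpow_nonneg hρ0.le _)]
  rw [hieq, ENNReal.ofReal_mul (Real.rpow_nonneg hρ0.le _)]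
  exact mul_le_mul_right
    (le_iSup₂ (f := fun (φ : Rn n → ℝ) (_ : φ ∈ intrinsicFamily n β) =>
      ENNReal.ofReal |∫ z, t' ^ (-(n : ℝ)) * φ (t'⁻¹ • (y' - z)) * f z|) ψ hψ) _

lemma myLintegralLe {X : Type*} [MeasurableSpace X] {μ : Measure X} {g : X → ℝ≥0∞}
    {S : Set X} (hS : MeasurableSet S) {cst : ℝ≥0∞} (h : ∀ t ∈ S, g t ≤ cst) :
    ∫⁻ t in S, g t ∂μ ≤ cst * μ S := by
  calc ∫⁻ t in S, g t ∂μ ≤ ∫⁻ _ in S, cst ∂μ :=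
    lintegral_mono_ae ((ae_restrict_iff' hS).2 (Filter.Eventually.of_forall h))
  _ = cst * μ S := setLIntegral_const S cst

lemma myLintegralGe {X : Type*} [MeasurableSpace X] {μ : Measure X} {g : X → ℝ≥0∞}
    {S : Set X} (hS : MeasurableSet S) {cst : ℝ≥0∞} (h : ∀ t ∈ S, cst ≤ g t) :
    cst * μ S ≤ ∫⁻ t in S, g t ∂μ := by
  calc cst * μ S = ∫⁻ _ in S, cst ∂μ := (setLIntegral_const S cst).symm
  _ ≤ ∫⁻ t in S, g t ∂μ :=
    lintegral_mono_ae ((ae_restrict_iff' hS).2 (Filter.Eventually.of_forall h))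

lemma myPairwiseDisjoint {a b : ℤ → ℝ} (h : ∀ k m : ℤ, k < m → b k ≤ a m) :
    Pairwise (Function.onFun Disjoint fun k => Ico (a k) (b k)) := by
  have key : ∀ k m : ℤ, k < m → Disjoint (Ico (a k) (b k)) (Ico (a m) (b m)) := by
    intro k m hkm
    rw [Set.Ico_disjoint_Ico]
    exact le_trans inf_le_left ((h k m hkm).trans le_sup_right)
  intro k m hkm
  rcases hkm.lt_or_gt with hl | hl
  · exact key k m hl
  · exact (key m k hl).symm

/-- Aperture dependence for the intrinsic square function:
`G_{β,α}(f)(x) ≤ C α^{3n/2+β} G_β(f)(x)` with `C = C(β,n)`. -/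
theorem intrinsicG_aperture (n : ℕ) :
    ∀ β : ℝ, 0 < β → β ≤ 1 → ∃ C > (0 : ℝ), ∀ α : ℝ, 1 ≤ α →
      ∀ f : Rn n → ℝ, LocallyIntegrable f volume → ∀ x : Rn n,
        intrinsicG n β α f x ≤
          ENNReal.ofReal (C * α ^ ((3 * n : ℝ) / 2 + β)) * intrinsicG n β 1 f x := by
  intro β hβ0 hβ1
  refine ⟨(8:ℝ) ^ (2*n+2), by positivity, fun α hα f _ x => ?_⟩
  have hα0 : (0:ℝ) < α := lt_of_lt_of_le one_pos hα
  set A := intrinsicA n β f with hA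
  set g : ℝ → ℝ≥0∞ := fun t =>
    (∫⁻ y in ball x (α * t), A y t ^ (2:ℝ)) / ENNReal.ofReal (t ^ (n+1)) with hg
  set g₁ : ℝ → ℝ≥0∞ := fun t =>
    (∫⁻ y in ball x (1 * t), A y t ^ (2:ℝ)) / ENNReal.ofReal (t ^ (n+1)) with hg1
  set D : ℝ≥0∞ := ENNReal.ofReal ((8:ℝ)^(2*n+2) * α ^ ((3*n:ℝ)/2+β)) with hD
  set T : ℝ≥0∞ := ENNReal.ofReal (((8:ℝ)^(2*n+2) * α ^ ((3*n:ℝ)/2+β))^2) with hT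
  have hTD : T = D^2 := by
    rw [hT, hD, ENNReal.ofReal_pow
      (mul_nonneg (by positivity) (Real.rpow_nonneg hα0.le _))]
  suffices hsq : ∫⁻ t in Ioi (0:ℝ), g t ≤ T * ∫⁻ t in Ioi (0:ℝ), g₁ t by
    have h1 : intrinsicG n β α f x = (∫⁻ t in Ioi (0:ℝ), g t) ^ ((1:ℝ)/2) := rfl
    have h2 : intrinsicG n β 1 f x = (∫⁻ t in Ioi (0:ℝ), g₁ t) ^ ((1:ℝ)/2) := rfl
    rw [h1, h2]
    calc (∫⁻ t in Ioi (0:ℝ), g t) ^ ((1:ℝ)/2)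
        ≤ (T * ∫⁻ t in Ioi (0:ℝ), g₁ t) ^ ((1:ℝ)/2) :=
          ENNReal.rpow_le_rpow hsq (by norm_num)
      _ = T ^ ((1:ℝ)/2) * (∫⁻ t in Ioi (0:ℝ), g₁ t) ^ ((1:ℝ)/2) :=
          ENNReal.mul_rpow_of_nonneg _ _ (by norm_num)
      _ = D * (∫⁻ t in Ioi (0:ℝ), g₁ t) ^ ((1:ℝ)/2) := by
          congr 1
          rw [hTD, ← ENNReal.rpow_natCast D 2, ← ENNReal.rpow_mul]
          norm_num
  -- constants
  set K : ℝ := (8*α) ^ ((n:ℝ) + β) with hK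
  have hK0 : 0 < K := Real.rpow_pos_of_pos (by linarith) _
  set ω : ℝ≥0∞ := volume (ball (0 : Rn n) 1) with hω
  have hω0 : ω ≠ 0 := (measure_ball_pos volume _ one_pos).ne'
  have hωt : ω ≠ ⊤ := measure_ball_lt_top.ne
  have hvol : ∀ (z : Rn n) (r : ℝ), 0 < r →
      volume (ball z r) = ENNReal.ofReal (r ^ n) * ω := by
    intro z r hr
    rw [hω, Measure.addHaar_ball_of_pos volume z hr]
    congr 2
    simp [finrank_euclideanSpace_fin]
  set Q : ℝ≥0∞ := ENNReal.ofReal (α ^ n * K ^ 2) * ω with hQ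
  have hQ0 : Q ≠ 0 := mul_ne_zero (ENNReal.ofReal_pos.2 (mul_pos (pow_pos hα0 n) (pow_pos hK0 2))).ne' hω0
  have hQt : Q ≠ ⊤ := ENNReal.mul_ne_top ENNReal.ofReal_ne_top hωt
  set cc : ℝ≥0∞ := ENNReal.ofReal (2 / 8 ^ (n+1)) * ω with hcc
  have hcc0 : cc ≠ 0 := mul_ne_zero (ENNReal.ofReal_pos.2 (by positivity)).ne' hω0
  have hcct : cc ≠ ⊤ := ENNReal.mul_ne_top ENNReal.ofReal_ne_top hωt
  have h2k : ∀ k : ℤ, (0:ℝ) < 2^k := fun k => zpow_pos two_pos k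
  have h2succ : ∀ k : ℤ, (2:ℝ)^(k+1) = 2*2^k := by
    intro k; rw [zpow_add_one₀ two_ne_zero]; ring
  -- the key claim
  have claim : ∀ (k : ℤ) (s : ℝ), s ∈ Ico (6*(α*2^k)) (8*(α*(2:ℝ)^k)) →
      ∀ y' ∈ ball x (α*2^k), ∀ t ∈ Ico ((2:ℝ)^k) ((2:ℝ)^(k+1)), ∀ y ∈ ball x (α*t),
      A y t ^ (2:ℝ) ≤ ENNReal.ofReal (K^2) * A y' s ^ (2:ℝ) := by
    intro k s hs y' hy' t ht y hy
    have ht0 : (0:ℝ) < t := lt_of_lt_of_le (h2k k) ht.1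
    have hyx : dist y x < α*t := mem_ball.1 hy
    have hy'x : dist y' x < α*2^k := mem_ball.1 hy'
    have hcond : t + dist y y' ≤ s := by
      have h3 := dist_triangle y x y'
      have h4 : dist x y' = dist y' x := dist_comm x y'
      have h5 : t < 2*2^k := (h2succ k) ▸ ht.2
      have h6 : α*t < α*(2*2^k) := by nlinarith
      have h7 : (2:ℝ)^k ≤ α*2^k := le_mul_of_one_le_left (h2k k).le hα
      nlinarith [hs.1]
    have hbase := intrinsicA_le n hβ0 f ht0 hcond
    have hs0' : (0:ℝ) < s := lt_of_lt_of_le (by nlinarith [h2k k]) hs.1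
    have hnβ : (0:ℝ) ≤ (n:ℝ) + β := by
      have := Nat.cast_nonneg (α := ℝ) n
      linarith
    have hstK : (s/t) ^ ((n:ℝ)+β) ≤ K := by
      rw [hK]
      apply Real.rpow_le_rpow (div_nonneg hs0'.le ht0.le) ?_ hnβ
      rw [div_le_iff₀ ht0]
      nlinarith [hs.2, ht.1, mul_le_mul_of_nonneg_left ht.1 (by positivity : (0:ℝ) ≤ 8*α)]
    have h8 : A y t ≤ ENNReal.ofReal K * A y' s :=
      hbase.trans (mul_le_mul_left (ENNReal.ofReal_le_ofReal hstK) _)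
    calc A y t ^ (2:ℝ) ≤ (ENNReal.ofReal K * A y' s) ^ (2:ℝ) :=
        ENNReal.rpow_le_rpow h8 (by norm_num)
      _ = ENNReal.ofReal (K^2) * A y' s ^ (2:ℝ) := by
          rw [ENNReal.mul_rpow_of_nonneg _ _ (by norm_num : (0:ℝ) ≤ 2),
            ENNReal.ofReal_rpow_of_pos hK0]
          congr 2
          rw [show ((2:ℝ)) = ((2:ℕ):ℝ) by norm_num, Real.rpow_natCast]
  set L : ℤ → ℝ≥0∞ := fun k => ∫⁻ t in Ico ((2:ℝ)^k) ((2:ℝ)^(k+1)), g t with hL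
  set R : ℤ → ℝ≥0∞ := fun k => ∫⁻ s in Ico (6*(α*2^k)) (8*(α*(2:ℝ)^k)), g₁ s with hR
  -- step 2 : L k ≤ Q * A y' s ^ 2 on the region
  have step2 : ∀ (k : ℤ) (s : ℝ), s ∈ Ico (6*(α*2^k)) (8*(α*(2:ℝ)^k)) →
      ∀ y' ∈ ball x (α*2^k), L k ≤ Q * A y' s ^ (2:ℝ) := by
    intro k s hs y' hy'
    have hbd : ∀ t ∈ Ico ((2:ℝ)^k) ((2:ℝ)^(k+1)), g t ≤
        (ENNReal.ofReal ((α^n * K^2)/2^k) * ω) * A y' s ^ (2:ℝ) := by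
      intro t ht
      have ht0 : (0:ℝ) < t := lt_of_lt_of_le (h2k k) ht.1
      have hin : (∫⁻ y in ball x (α*t), A y t ^ (2:ℝ)) ≤
          (ENNReal.ofReal (K^2) * A y' s ^ (2:ℝ)) * volume (ball x (α*t)) :=
        myLintegralLe (μ := volume) measurableSet_ball (fun y hy => claim k s hs y' hy' t ht y hy)
      rw [hg]
      simp only
      rw [ENNReal.div_le_iff_le_mul
        (Or.inl (ENNReal.ofReal_pos.2 (pow_pos ht0 (n+1))).ne') (Or.inl ENNReal.ofReal_ne_top)]
      refine hin.trans ?_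
      rw [hvol x (α*t) (mul_pos hα0 ht0)]
      have lhs_eq : ENNReal.ofReal (K^2) * A y' s ^ (2:ℝ) * (ENNReal.ofReal ((α*t)^n) * ω)
          = ENNReal.ofReal (K^2 * (α*t)^n) * (A y' s ^ (2:ℝ) * ω) := by
        rw [ENNReal.ofReal_mul (by positivity)]; ring
      have rhs_eq : ENNReal.ofReal ((α^n * K^2)/2^k) * ω * A y' s ^ (2:ℝ)
            * ENNReal.ofReal (t^(n+1))
          = ENNReal.ofReal ((α^n * K^2)/2^k * t^(n+1)) * (A y' s ^ (2:ℝ) * ω) := by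
        rw [ENNReal.ofReal_mul
          (div_nonneg (mul_nonneg (pow_nonneg hα0.le n) (sq_nonneg K)) (h2k k).le)]
        ring
      rw [lhs_eq, rhs_eq]
      refine mul_le_mul_left (ENNReal.ofReal_le_ofReal ?_) _
      have h1 : (1:ℝ) ≤ t / 2^k := (one_le_div (h2k k)).2 ht.1
      rw [mul_pow, pow_succ]
      calc K^2 * (α^n * t^n) = (α^n*K^2*t^n) * 1 := by ring
        _ ≤ (α^n*K^2*t^n) * (t/2^k) :=
            mul_le_mul_of_nonneg_left h1
              (mul_nonneg (mul_nonneg (pow_nonneg hα0.le n) (sq_nonneg K)) (pow_nonneg ht0.le n))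
        _ = α^n*K^2/2^k * (t^n*t) := by ring
    have hLk := myLintegralLe (μ := volume) measurableSet_Ico hbd
    rw [Real.volume_Ico] at hLk
    refine le_trans hLk ?_
    have h2 : (2:ℝ)^(k+1) - 2^k = 2^k := by rw [h2succ k]; ring
    rw [h2, hQ]
    refine le_of_eq ?_
    have hmerge : ENNReal.ofReal ((α^n * K^2)/2^k) * ENNReal.ofReal ((2:ℝ)^k)
        = ENNReal.ofReal (α^n*K^2) := by
      rw [← ENNReal.ofReal_mul
        (div_nonneg (mul_nonneg (pow_nonneg hα0.le n) (sq_nonneg K)) (h2k k).le)]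
      congr 1
      field_simp
    calc ENNReal.ofReal ((α^n * K^2)/2^k) * ω * A y' s ^ (2:ℝ) * ENNReal.ofReal ((2:ℝ)^k)
        = (ENNReal.ofReal ((α^n * K^2)/2^k) * ENNReal.ofReal ((2:ℝ)^k))
            * (ω * A y' s ^ (2:ℝ)) := by ring
      _ = ENNReal.ofReal (α^n*K^2) * ω * A y' s ^ (2:ℝ) := by rw [hmerge]; ring
  -- step 3 : L k / Q * cc ≤ R k
  have step3 : ∀ k : ℤ, L k / Q * cc ≤ R k := by
    intro k
    set r : ℝ := α*2^k with hr
    have hr0 : (0:ℝ) < r := mul_pos hα0 (h2k k)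
    have hball : ∀ s ∈ Ico (6*r) (8*r), ball x r ⊆ ball x (1*s) := by
      intro s hs
      apply ball_subset_ball
      rw [one_mul]
      nlinarith [hs.1, hr0]
    have hlow : ∀ s ∈ Ico (6*r) (8*r),
        (L k / Q) * (ENNReal.ofReal (r^n) * ω) / ENNReal.ofReal ((8*r)^(n+1)) ≤ g₁ s := by
      intro s hs
      have hs0 : (0:ℝ) < s := lt_of_lt_of_le (by linarith) hs.1
      have hAlb : ∀ y'' ∈ ball x r, L k / Q ≤ A y'' s ^ (2:ℝ) := by
        intro y'' hy''
        rw [ENNReal.div_le_iff_le_mul (Or.inl hQ0) (Or.inl hQt), mul_comm]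
        exact step2 k s hs y'' hy''
      have hinner : (L k / Q) * (ENNReal.ofReal (r^n) * ω)
          ≤ ∫⁻ y in ball x (1*s), A y s ^ (2:ℝ) := by
        calc (L k / Q) * (ENNReal.ofReal (r^n) * ω)
            = (L k / Q) * volume (ball x r) := by rw [hvol x r hr0]
          _ ≤ ∫⁻ y in ball x r, A y s ^ (2:ℝ) :=
              myLintegralGe (μ := volume) measurableSet_ball hAlb
          _ ≤ _ := lintegral_mono' (Measure.restrict_mono (hball s hs) le_rfl) le_rfl
      rw [hg1]
      simp only
      exact ENNReal.div_le_div hinner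
        (ENNReal.ofReal_le_ofReal (pow_le_pow_left₀ hs0.le hs.2.le _))
    have hRk := myLintegralGe (μ := volume) measurableSet_Ico hlow
    rw [Real.volume_Ico] at hRk
    refine le_trans ?_ hRk
    have h2 : 8*r - 6*r = 2*r := by ring
    rw [h2]
    have hrne : r ≠ 0 := hr0.ne'
    have h8ne : ((8:ℝ))^(n+1) ≠ 0 := by positivity
    have key : (ENNReal.ofReal (r^n) * ω) / ENNReal.ofReal ((8*r)^(n+1))
        * ENNReal.ofReal (2*r) = cc := by
      have e : ENNReal.ofReal (r^n) * ω / ENNReal.ofReal ((8*r)^(n+1))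
          * ENNReal.ofReal (2*r)
          = ENNReal.ofReal (r^n * (2*r) / (8*r)^(n+1)) * ω := by
        rw [ENNReal.ofReal_div_of_pos (pow_pos (by linarith : (0:ℝ) < 8*r) (n+1)),
          ENNReal.ofReal_mul (pow_nonneg hr0.le n)]
        simp only [div_eq_mul_inv]; ring
      rw [e, hcc]
      congr 2
      rw [mul_pow, pow_succ]
      field_simp
      ring
    refine le_of_eq ?_
    calc L k / Q * cc
        = L k / Q * ((ENNReal.ofReal (r^n) * ω) / ENNReal.ofReal ((8*r)^(n+1))
            * ENNReal.ofReal (2*r)) := by rw [key]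
      _ = L k / Q * (ENNReal.ofReal (r^n) * ω) / ENNReal.ofReal ((8*r)^(n+1))
            * ENNReal.ofReal (2*r) := by
          simp only [div_eq_mul_inv]; ring
  -- the real constant inequality
  have hrealineq : α^n * K^2 ≤ ((8:ℝ)^(2*n+2) * α^((3*n:ℝ)/2+β))^2 * (2/8^(n+1)) := by
    have h8 : (0:ℝ) < 8 := by norm_num
    have e1 : α^n * K^2 = 8 ^ (2*(n:ℝ)+2*β) * α ^ (3*(n:ℝ)+2*β) := by
      have h1 : K^2 = (8*α) ^ (2*(n:ℝ)+2*β) := by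
        rw [hK, ← Real.rpow_natCast ((8*α) ^ ((n:ℝ)+β)) 2, ← Real.rpow_mul (by linarith)]
        rw [show ((n:ℝ)+β)*((2:ℕ):ℝ) = 2*(n:ℝ)+2*β by push_cast; ring]
      rw [h1, Real.mul_rpow (by norm_num) hα0.le, ← Real.rpow_natCast α n]
      calc α ^ ((n:ℕ):ℝ) * (8 ^ (2*(n:ℝ)+2*β) * α ^ (2*(n:ℝ)+2*β))
          = 8 ^ (2*(n:ℝ)+2*β) * (α ^ ((n:ℕ):ℝ) * α ^ (2*(n:ℝ)+2*β)) := by ring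
        _ = 8 ^ (2*(n:ℝ)+2*β) * α ^ (((n:ℕ):ℝ) + (2*(n:ℝ)+2*β)) := by
            rw [← Real.rpow_add hα0]
        _ = 8 ^ (2*(n:ℝ)+2*β) * α ^ (3*(n:ℝ)+2*β) := by
            rw [show ((n:ℕ):ℝ) + (2*(n:ℝ)+2*β) = 3*(n:ℝ)+2*β by push_cast; ring]
    have hA1 : (α^((3*n:ℝ)/2+β))^2 = α ^ (3*(n:ℝ)+2*β) := by
      rw [← Real.rpow_natCast (α ^ ((3*n:ℝ)/2+β)) 2, ← Real.rpow_mul hα0.le]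
      rw [show ((3*n:ℝ)/2+β)*((2:ℕ):ℝ) = 3*(n:ℝ)+2*β by push_cast; ring]
    have hA2 : (((8:ℝ)^(2*n+2))^2) * (2/8^(n+1)) = 2 * 8 ^ (3*(n:ℝ)+3) := by
      have h3 : (8:ℝ) ^ (3*(n:ℝ)+3) = 8 ^ (3*n+3 : ℕ) := by
        rw [← Real.rpow_natCast (8:ℝ) (3*n+3)]
        congr 1
        push_cast; ring
      rw [h3, ← pow_mul, show (2*n+2)*2 = (3*n+3) + (n+1) by ring, pow_add]
      field_simp
    have e2 : ((8:ℝ)^(2*n+2) * α^((3*n:ℝ)/2+β))^2 * (2/8^(n+1))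
        = 2 * 8 ^ (3*(n:ℝ)+3) * α ^ (3*(n:ℝ)+2*β) := by
      rw [mul_pow, hA1]
      calc ((8:ℝ)^(2*n+2))^2 * α ^ (3*(n:ℝ)+2*β) * (2/8^(n+1))
          = (((8:ℝ)^(2*n+2))^2 * (2/8^(n+1))) * α ^ (3*(n:ℝ)+2*β) := by ring
        _ = 2 * 8 ^ (3*(n:ℝ)+3) * α ^ (3*(n:ℝ)+2*β) := by rw [hA2]
    rw [e1, e2]
    have h88 : (8:ℝ) ^ (2*(n:ℝ)+2*β) ≤ 2 * 8 ^ (3*(n:ℝ)+3) := by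
      calc (8:ℝ)^(2*(n:ℝ)+2*β) ≤ 8 ^ (3*(n:ℝ)+3) :=
          Real.rpow_le_rpow_of_exponent_le (by norm_num)
            (by have := Nat.cast_nonneg (α := ℝ) n; linarith)
        _ ≤ 2 * 8^(3*(n:ℝ)+3) := by
            nlinarith [Real.rpow_pos_of_pos h8 (3*(n:ℝ)+3)]
    exact mul_le_mul_of_nonneg_right h88 (Real.rpow_nonneg hα0.le _)
  -- step 4 : L k ≤ T * R k
  have hQc : Q / cc ≤ T := by
    rw [ENNReal.div_le_iff_le_mul (Or.inl hcc0) (Or.inl hcct), hQ, hcc, hT, ← mul_assoc]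
    refine mul_le_mul_left ?_ ω
    rw [← ENNReal.ofReal_mul (by positivity)]
    exact ENNReal.ofReal_le_ofReal hrealineq
  have step4 : ∀ k : ℤ, L k ≤ T * R k := by
    intro k
    have h1 : L k / Q ≤ R k / cc :=
      (ENNReal.le_div_iff_mul_le (Or.inl hcc0) (Or.inl hcct)).2 (step3 k)
    have h2 : L k = L k / Q * Q := (ENNReal.div_mul_cancel hQ0 hQt).symm
    rw [h2]
    calc L k / Q * Q ≤ R k / cc * Q := mul_le_mul_left h1 Q
      _ = R k * (Q / cc) := by simp only [div_eq_mul_inv]; ring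
      _ ≤ R k * T := mul_le_mul_right hQc _
      _ = T * R k := mul_comm _ _
  -- decomposition of the cone integrals
  have hSunion : Ioi (0:ℝ) = ⋃ k : ℤ, Ico ((2:ℝ)^k) ((2:ℝ)^(k+1)) := by
    ext t
    simp only [mem_Ioi, mem_iUnion, mem_Ico]
    constructor
    · intro ht
      obtain ⟨k, hk⟩ := exists_mem_Ico_zpow ht one_lt_two
      exact ⟨k, hk.1, hk.2⟩
    · rintro ⟨k, hk1, _⟩
      exact lt_of_lt_of_le (h2k k) hk1
  have hdisjS : Pairwise (Function.onFun Disjoint fun k : ℤ => Ico ((2:ℝ)^k) ((2:ℝ)^(k+1))) := by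
    apply myPairwiseDisjoint
    intro k m hkm
    exact zpow_le_zpow_right₀ one_le_two (by omega)
  have hdisjJ : Pairwise (Function.onFun Disjoint fun k : ℤ =>
      Ico (6*(α*(2:ℝ)^k)) (8*(α*(2:ℝ)^k))) := by
    apply myPairwiseDisjoint
    intro k m hkm
    have h1 : (2:ℝ)^(k+1) ≤ 2^m := zpow_le_zpow_right₀ one_le_two (by omega)
    rw [h2succ k] at h1
    nlinarith [h2k k, h2k m, mul_le_mul_of_nonneg_left h1 hα0.le, mul_pos hα0 (h2k m)]
  have hdecomp : ∫⁻ t in Ioi (0:ℝ), g t = ∑' k : ℤ, L k := by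
    rw [hSunion, Measure.restrict_iUnion hdisjS (fun k => measurableSet_Ico),
      lintegral_sum_measure]
  have hsum2 : ∑' k : ℤ, R k ≤ ∫⁻ t in Ioi (0:ℝ), g₁ t := by
    rw [← lintegral_sum_measure, ← Measure.restrict_iUnion hdisjJ (fun k => measurableSet_Ico)]
    refine lintegral_mono' (Measure.restrict_mono ?_ le_rfl) le_rfl
    refine iUnion_subset fun k t ht => ?_
    exact lt_of_lt_of_le (by positivity) ht.1
  calc ∫⁻ t in Ioi (0:ℝ), g t = ∑' k : ℤ, L k := hdecomp
    _ ≤ ∑' k : ℤ, T * R k := ENNReal.tsum_le_tsum step4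
    _ = T * ∑' k : ℤ, R k := ENNReal.tsum_mul_left
    _ ≤ T * ∫⁻ t in Ioi (0:ℝ), g₁ t := mul_le_mul_right hsum2 _
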